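/- Let (X,f,x) and (Y,g,y) be pointed minimal compact systems. The following are equivalent: (1) (X,f,x) and (Y,g,y) are conjugate; (2) for every sequence of integers (n_k), the sequence (f^{n_k}(x)) converges if and only if (g^{n_k}(y)) converges; (3) the sequences (f^n(x))_{n∈ℕ} and (g^n(y))_{n∈ℕ} have the same topological type and there exists a strictly increasing sequence (m_k) of natural numbers such that f^{m_k}(x) → x and g^{m_k}(y) → y. -/

import Mathlib

open Filter Topology

section Defs

variable {X : Type*}

/-- The shift by `m`: `(shiftZ m z) n = z (n + m)`, so `shiftZ 1` is the left shift `S`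
and `shiftZ m = S^m`. -/
def shiftZ (m : ℤ) (z : ℤ → X) : ℤ → X := fun n => z (n + m)

/-- `Per_p(z)`: the set of positions `n` such that `z m = z n` for all `m ≡ n (mod p)`. -/
def PerSet (p : ℕ) (z : ℤ → X) : Set ℤ :=
  {n : ℤ | ∀ m : ℤ, (p : ℤ) ∣ m - n → z m = z n}

/-- `Per(z) = ⋃_{p ≥ 1} Per_p(z)`. -/
def PerFull (z : ℤ → X) : Set ℤ := {n : ℤ | ∃ p : ℕ, 1 ≤ p ∧ n ∈ PerSet p z}

/-- A Toeplitz sequence: every position is periodic. -/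
def IsToeplitz (z : ℤ → X) : Prop := ∀ n : ℤ, n ∈ PerFull z

/-- A non-periodic sequence: `S^m z ≠ z` for all `m ≠ 0`. -/
def NonPeriodicSeq (z : ℤ → X) : Prop := ∀ m : ℤ, m ≠ 0 → shiftZ m z ≠ z

/-- `u` and `v` have the same `p`-skeleton. -/
def SamePSkeleton (p : ℕ) (u v : ℤ → X) : Prop :=
  PerSet p u = PerSet p v ∧ ∀ n ∈ PerSet p u, u n = v n

/-- A period structure of a (non-periodic) Toeplitz sequence `z`. -/
def IsPeriodStructure (p : ℕ → ℕ) (z : ℤ → X) : Prop :=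
  (∀ i, 1 ≤ p i) ∧
  (∀ i q, 1 ≤ q → q < p i → PerSet q z ≠ PerSet (p i) z) ∧
  (∀ i, p i ∣ p (i + 1)) ∧
  (∀ n : ℤ, ∃ i, n ∈ PerSet (p i) z)

/-- A fast growing sequence of positive integers. -/
def FastGrowing (p : ℕ → ℕ) : Prop :=
  p 0 = 1 ∧ (∀ i, p i ∣ p (i + 1)) ∧ 3 ≤ p 1 ∧ ∀ i, 3 * p i ≤ p (i + 1)

/-- `oxDefined p i` is the set of positions of the Oxtoby sequence that are filled in
after step `i` of the inductive construction (step `i+1` fills, for each `k ≡ 0` or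
`-1 (mod p_{i+1}/p_i)`, the still-empty positions `J(i,k)` of the block
`[k p_i, (k+1) p_i)`). -/
def oxDefined (p : ℕ → ℕ) : ℕ → Set ℤ
  | 0 => ∅
  | i + 1 =>
      oxDefined p i ∪
        {n : ℤ | ∃ k : ℤ,
          (((p (i + 1) / p i : ℕ) : ℤ) ∣ k ∨ ((p (i + 1) / p i : ℕ) : ℤ) ∣ (k + 1)) ∧
          k * (p i : ℤ) ≤ n ∧ n < (k + 1) * (p i : ℤ) ∧ n ∉ oxDefined p i}

/-- `J(i,k)`: the set of positions in `[k p_i, (k+1) p_i)` still undefined after step `i`. -/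
def oxJ (p : ℕ → ℕ) (i : ℕ) (k : ℤ) : Set ℤ :=
  {n : ℤ | k * (p i : ℤ) ≤ n ∧ n < (k + 1) * (p i : ℤ) ∧ n ∉ oxDefined p i}

/-- The Oxtoby sequence `z((p_i),(x_i))`: position `n` receives the value `x_i` where `i`
is the first step after which `n` is defined. -/
noncomputable def oxtoby (p : ℕ → ℕ) (x : ℕ → X) : ℤ → X :=
  fun n => x (sInf {i : ℕ | n ∈ oxDefined p i})

/-- The reverse of a bi-infinite sequence: `x⁻¹(n) = x(-n)`. -/
def revSeq (z : ℤ → X) : ℤ → X := fun n => z (-n)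

/-- `[n0, n1]` is a maximal `p`-periodic block in `x`. -/
def IsMaxPeriodicBlock (p : ℕ) (x : ℤ → X) (n0 n1 : ℤ) : Prop :=
  n0 ≤ n1 ∧ Set.Icc n0 n1 ⊆ PerSet p x ∧
    ∀ n0' n1' : ℤ, n0' ≤ n0 → n1 ≤ n1' → Set.Icc n0' n1' ⊆ PerSet p x →
      n0' = n0 ∧ n1' = n1

variable [TopologicalSpace X]

/-- The orbit closure of `z` in `X^ℤ` with the product topology. -/
def orbitClosure (z : ℤ → X) : Set (ℤ → X) :=
  closure {y : ℤ → X | ∃ m : ℤ, y = shiftZ m z}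

/-- The ω-limit set of a sequence: all limits of convergent subsequences. -/
def omegaLimitSet (x : ℕ → X) : Set X :=
  {a : X | ∃ φ : ℕ → ℕ, StrictMono φ ∧ Tendsto (x ∘ φ) atTop (𝓝 a)}

/-- Two sequences have the same topological type if exactly the same subsequences
converge. -/
def SameTopType {Y : Type*} [TopologicalSpace Y] (x : ℕ → X) (y : ℕ → Y) : Prop :=
  ∀ φ : ℕ → ℕ, StrictMono φ →
    ((∃ a, Tendsto (x ∘ φ) atTop (𝓝 a)) ↔ (∃ a, Tendsto (y ∘ φ) atTop (𝓝 a)))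

/-- `f` is a conjugacy between the shift-invariant sets `A` and `B`: a homeomorphism
from `A` onto `B` commuting with the shift. -/
def IsConjugacy (A B : Set (ℤ → X)) (f : (ℤ → X) → (ℤ → X)) : Prop :=
  Set.MapsTo f A B ∧ ContinuousOn f A ∧
    (∃ g : (ℤ → X) → (ℤ → X), Set.MapsTo g B A ∧ ContinuousOn g B ∧
      (∀ a ∈ A, g (f a) = a) ∧ (∀ b ∈ B, f (g b) = b)) ∧
    ∀ a ∈ A, f (shiftZ 1 a) = shiftZ 1 (f a)

/-- The `m`-th iterate (for `m : ℤ`) of a self-homeomorphism. -/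
def iterZ {Y : Type*} [TopologicalSpace Y] (f : Y ≃ₜ Y) (m : ℤ) (a : Y) : Y :=
  ((f.toEquiv ^ m : Equiv.Perm Y)) a

end Defs


set_option linter.unusedSectionVars false
set_option maxHeartbeats 1000000

section A
variable {X : Type*} [TopologicalSpace X] (f : X ≃ₜ X)

lemma iterZ_zero (a : X) : iterZ f 0 a = a := by simp [iterZ]

lemma iterZ_one (a : X) : iterZ f 1 a = f a := by simp [iterZ]

lemma iterZ_neg_one (a : X) : iterZ f (-1) a = f.symm a := by
  simp [iterZ, zpow_neg, zpow_one]

lemma iterZ_add (m n : ℤ) (a : X) : iterZ f (m + n) a = iterZ f m (iterZ f n a) := by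
  simp [iterZ, zpow_add, Equiv.Perm.mul_apply]

lemma continuous_iterZ (n : ℤ) : Continuous (iterZ f n) := by
  induction n using Int.induction_on with
  | zero => simpa [funext (iterZ_zero f)] using (continuous_id' : Continuous fun a : X => a)
  | succ k ih =>
      have : iterZ f ((k : ℤ) + 1) = fun a => iterZ f k (f a) := by
        funext a; rw [iterZ_add, iterZ_one]
      rw [this]; exact ih.comp f.continuous
  | pred k ih =>
      have : iterZ f (-(k : ℤ) - 1) = fun a => iterZ f (-k) (f.symm a) := by
        funext a; rw [sub_eq_add_neg, iterZ_add, iterZ_neg_one]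
      rw [this]; exact ih.comp f.symm.continuous

lemma conj_iterZ {Y : Type*} [TopologicalSpace Y] (g : Y ≃ₜ Y) (h : X ≃ₜ Y)
    (hc : ∀ a, h (f a) = g (h a)) (n : ℤ) (a : X) :
    h (iterZ f n a) = iterZ g n (h a) := by
  induction n using Int.induction_on with
  | zero => rw [iterZ_zero, iterZ_zero]
  | succ k ih =>
      have e1 : (k : ℤ) + 1 = 1 + k := by ring
      rw [e1, iterZ_add, iterZ_add, iterZ_one, iterZ_one, hc, ih]
  | pred k ih =>
      have e1 : -(k : ℤ) - 1 = -1 + -k := by ring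
      have hsymm : ∀ b : X, h (f.symm b) = g.symm (h b) := by
        intro b
        have := hc (f.symm b)
        rw [f.apply_symm_apply] at this
        rw [this, g.symm_apply_apply]
      rw [e1, iterZ_add, iterZ_add, iterZ_neg_one, iterZ_neg_one, hsymm, ih]
end A

section B
variable {X Y : Type*} [MetricSpace X] [CompactSpace X] [MetricSpace Y] [CompactSpace Y]

lemma keyUC (f : X ≃ₜ X) (g : Y ≃ₜ Y) (x : X) (y : Y)
    (H : ∀ n : ℕ → ℤ, (∃ l, Tendsto (fun k => iterZ f (n k) x) atTop (𝓝 l)) →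
        (∃ l, Tendsto (fun k => iterZ g (n k) y) atTop (𝓝 l))) :
    ∀ ε : ℝ, 0 < ε → ∃ δ : ℝ, 0 < δ ∧ ∀ n m : ℤ,
      dist (iterZ f n x) (iterZ f m x) < δ → dist (iterZ g n y) (iterZ g m y) ≤ ε := by
  intro ε hε
  by_contra hcon
  push_neg at hcon
  have hsel : ∀ k : ℕ, ∃ n m : ℤ,
      dist (iterZ f n x) (iterZ f m x) < 1 / (k + 1) ∧
      ε < dist (iterZ g n y) (iterZ g m y) := by
    intro k
    obtain ⟨n, m, h1, h2⟩ := hcon (1 / (k + 1)) (by positivity)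
    exact ⟨n, m, h1, h2⟩
  choose u v hd hg2 using hsel
  obtain ⟨a, φ, hφ, hfa⟩ := CompactSpace.tendsto_subseq (fun k => iterZ f (u k) x)
  replace hfa : Tendsto (fun k => iterZ f (u (φ k)) x) atTop (𝓝 a) := hfa
  set c : ℕ → ℤ := fun k => if Even k then u (φ (k / 2)) else v (φ (k / 2)) with hc
  have hFc : Tendsto (fun k => iterZ f (c k) x) atTop (𝓝 a) := by
    rw [Metric.tendsto_atTop]
    intro ε' hε'
    obtain ⟨K₁, hK₁⟩ := Metric.tendsto_atTop.mp hfa (ε' / 2) (by positivity)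
    obtain ⟨K₂, hK₂⟩ := exists_nat_one_div_lt (show (0:ℝ) < ε' / 2 by positivity)
    refine ⟨2 * (K₁ + K₂ + 1), fun k hk => ?_⟩
    have hj : K₁ + K₂ + 1 ≤ k / 2 := Nat.le_div_iff_mul_le (by norm_num) |>.mpr (by omega)
    set j := k / 2
    have hjK₁ : K₁ ≤ j := by omega
    have hjK₂ : K₂ ≤ j := by omega
    have h1 : dist (iterZ f (u (φ j)) x) a < ε' / 2 := hK₁ j hjK₁
    have h2 : dist (iterZ f (u (φ j)) x) (iterZ f (v (φ j)) x) < ε' / 2 := by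
      calc dist (iterZ f (u (φ j)) x) (iterZ f (v (φ j)) x) < 1 / (φ j + 1) := hd (φ j)
        _ ≤ 1 / (j + 1) := by
            apply one_div_le_one_div_of_le (by positivity)
            have h : j ≤ φ j := hφ.le_apply
            have : (j:ℝ) ≤ (φ j : ℝ) := by exact_mod_cast h
            linarith
        _ ≤ 1 / (K₂ + 1) := by
            apply one_div_le_one_div_of_le (by positivity)
            have : (K₂:ℝ) ≤ j := by exact_mod_cast hjK₂
            linarith
        _ < ε' / 2 := hK₂
    by_cases hev : Even k
    · simpa [hc, hev] using lt_trans h1 (by linarith)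
    · have : dist (iterZ f (v (φ j)) x) a < ε' := by
        calc dist (iterZ f (v (φ j)) x) a
            ≤ dist (iterZ f (v (φ j)) x) (iterZ f (u (φ j)) x) + dist (iterZ f (u (φ j)) x) a :=
              dist_triangle _ _ _
          _ < ε' := by rw [dist_comm]; linarith
      simpa [hc, hev] using this
  obtain ⟨b, hb⟩ := H c ⟨a, hFc⟩
  have heven : Tendsto (fun j => iterZ g (u (φ j)) y) atTop (𝓝 b) := by
    have hm : Tendsto (fun j : ℕ => 2 * j) atTop atTop :=
      (strictMono_mul_left_of_pos (show 0 < 2 by norm_num)).tendsto_atTop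
    refine (hb.comp hm).congr fun j => ?_
    have h1 : c (2 * j) = u (φ j) := by
      have : Even (2 * j) := even_two_mul j
      simp only [hc, this, if_true, Nat.mul_div_cancel_left _ (by norm_num : 0 < 2)]
    simp [Function.comp, h1]
  have hodd : Tendsto (fun j => iterZ g (v (φ j)) y) atTop (𝓝 b) := by
    have hm : Tendsto (fun j : ℕ => 2 * j + 1) atTop atTop :=
      ((strictMono_mul_left_of_pos (show 0 < 2 by norm_num)).add_const 1).tendsto_atTop
    refine (hb.comp hm).congr fun j => ?_
    have hne : ¬ Even (2 * j + 1) := by simp [parity_simps]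
    have hdv : (2 * j + 1) / 2 = j := by omega
    have h1 : c (2 * j + 1) = v (φ j) := by simp only [hc, hne, if_false, hdv]
    simp [Function.comp, h1]
  have hdist : Tendsto (fun j => dist (iterZ g (u (φ j)) y) (iterZ g (v (φ j)) y)) atTop (𝓝 0) := by
    simpa using heven.dist hodd
  obtain ⟨j, hj⟩ := (hdist.eventually (eventually_lt_nhds hε)).exists
  exact absurd (hg2 (φ j)) (not_lt.mpr hj.le)
end B

section C
variable {X Y : Type*} [MetricSpace X] [CompactSpace X] [MetricSpace Y] [CompactSpace Y]

lemma half_conj (f : X ≃ₜ X) (g : Y ≃ₜ Y) (x : X) (y : Y)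
    (hd : Dense (Set.range fun n : ℤ => iterZ f n x))
    (UC : ∀ ε : ℝ, 0 < ε → ∃ δ : ℝ, 0 < δ ∧ ∀ n m : ℤ,
      dist (iterZ f n x) (iterZ f m x) < δ → dist (iterZ g n y) (iterZ g m y) ≤ ε) :
    ∃ h : X → Y, Continuous h ∧ ∀ n : ℤ, h (iterZ f n x) = iterZ g n y := by
  -- choose approximating sequences
  have hsel : ∀ a : X, ∃ n : ℕ → ℤ, Tendsto (fun k => iterZ f (n k) x) atTop (𝓝 a) := by
    intro a
    have ha : a ∈ closure (Set.range fun n : ℤ => iterZ f n x) := hd a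
    obtain ⟨s, hs, hlim⟩ := mem_closure_iff_seq_limit.mp ha
    choose n hn using hs
    exact ⟨n, by simpa [funext hn] using hlim⟩
  choose sel hsel using hsel
  -- the image sequences are Cauchy, hence convergent
  have hcv : ∀ a : X, ∃ b : Y, Tendsto (fun k => iterZ g (sel a k) y) atTop (𝓝 b) := by
    intro a
    have : CauchySeq (fun k => iterZ g (sel a k) y) := by
      rw [Metric.cauchySeq_iff]
      intro ε hε
      obtain ⟨δ, hδ, hUC⟩ := UC (ε / 2) (by positivity)
      obtain ⟨N, hN⟩ := Metric.cauchySeq_iff.mp (hsel a).cauchySeq δ hδ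
      exact ⟨N, fun m hm n hn => lt_of_le_of_lt (hUC _ _ (hN m hm n hn)) (by linarith)⟩
    exact cauchySeq_tendsto_of_complete this
  choose h hh using hcv
  -- key characterization
  have hchar : ∀ (a : X) (n : ℕ → ℤ), Tendsto (fun k => iterZ f (n k) x) atTop (𝓝 a) →
      Tendsto (fun k => iterZ g (n k) y) atTop (𝓝 (h a)) := by
    intro a n hn
    rw [Metric.tendsto_atTop]
    intro ε hε
    obtain ⟨δ, hδ, hUC⟩ := UC (ε / 3) (by positivity)
    obtain ⟨N₁, hN₁⟩ := Metric.tendsto_atTop.mp hn (δ / 2) (by positivity)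
    obtain ⟨N₂, hN₂⟩ := Metric.tendsto_atTop.mp (hsel a) (δ / 2) (by positivity)
    obtain ⟨N₃, hN₃⟩ := Metric.tendsto_atTop.mp (hh a) (ε / 3) (by positivity)
    refine ⟨N₁ + N₂ + N₃, fun k hk => ?_⟩
    have hF : dist (iterZ f (n k) x) (iterZ f (sel a k) x) < δ := by
      calc dist (iterZ f (n k) x) (iterZ f (sel a k) x)
          ≤ dist (iterZ f (n k) x) a + dist (iterZ f (sel a k) x) a := dist_triangle_right _ _ _
        _ < δ := by
            have := hN₁ k (by omega); have := hN₂ k (by omega); linarith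
    have hG : dist (iterZ g (n k) y) (iterZ g (sel a k) y) ≤ ε / 3 := hUC _ _ hF
    calc dist (iterZ g (n k) y) (h a)
        ≤ dist (iterZ g (n k) y) (iterZ g (sel a k) y) + dist (iterZ g (sel a k) y) (h a) :=
          dist_triangle _ _ _
      _ < ε := by have := hN₃ k (by omega); linarith
  refine ⟨h, ?_, ?_⟩
  · rw [Metric.continuous_iff]
    intro a ε hε
    obtain ⟨δ, hδ, hUC⟩ := UC (ε / 2) (by positivity)
    refine ⟨δ / 3, by positivity, fun a' ha' => ?_⟩
    have hle : dist (h a') (h a) ≤ ε / 2 := by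
      have hdt : Tendsto (fun k => dist (iterZ g (sel a' k) y) (iterZ g (sel a k) y)) atTop
          (𝓝 (dist (h a') (h a))) := (hh a').dist (hh a)
      refine le_of_tendsto hdt ?_
      obtain ⟨N₁, hN₁⟩ := Metric.tendsto_atTop.mp (hsel a') (δ / 3) (by positivity)
      obtain ⟨N₂, hN₂⟩ := Metric.tendsto_atTop.mp (hsel a) (δ / 3) (by positivity)
      filter_upwards [eventually_ge_atTop (N₁ + N₂)] with k hk
      apply hUC
      calc dist (iterZ f (sel a' k) x) (iterZ f (sel a k) x)
          ≤ dist (iterZ f (sel a' k) x) a' + dist a' a + dist a (iterZ f (sel a k) x) :=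
            dist_triangle4 _ _ _ _
        _ < δ := by
            have := hN₁ k (by omega); have := hN₂ k (by omega)
            rw [dist_comm a (iterZ f (sel a k) x)] at *
            linarith
    linarith
  · intro n
    have h1 : Tendsto (fun _ : ℕ => iterZ f n x) atTop (𝓝 (iterZ f n x)) := tendsto_const_nhds
    have h2 := hchar (iterZ f n x) (fun _ => n) h1
    exact tendsto_nhds_unique h2 tendsto_const_nhds
end C

section D
variable {X : Type*} [MetricSpace X] [CompactSpace X]

lemma exists_return (f : X ≃ₜ X)
    (hf : ∀ a : X, Dense (Set.range fun n : ℤ => iterZ f n a)) (x : X) :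
    ∃ m : ℕ → ℕ, StrictMono m ∧ Tendsto (fun k => iterZ f (m k : ℤ) x) atTop (𝓝 x) := by
  have claim : ∀ ε : ℝ, 0 < ε → ∀ N : ℕ, ∃ n : ℕ, N < n ∧ dist (iterZ f (n : ℤ) x) x < ε := by
    intro ε hε N
    set U := Metric.ball x ε with hU
    have hcover : (Set.univ : Set X) ⊆ ⋃ n : ℤ, (iterZ f n) ⁻¹' U := by
      intro a _
      obtain ⟨p, ⟨n, rfl⟩, hp⟩ := (hf a).exists_mem_open Metric.isOpen_ball
        ⟨x, Metric.mem_ball_self hε⟩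
      exact Set.mem_iUnion.mpr ⟨n, hp⟩
    obtain ⟨t, ht⟩ := isCompact_univ.elim_finite_subcover _
      (fun n : ℤ => (Metric.isOpen_ball).preimage (continuous_iterZ f n)) hcover
    set M : ℕ := t.sup Int.natAbs with hM
    have hmem := ht (Set.mem_univ (iterZ f ((N : ℤ) + 1 + M) x))
    rw [Set.mem_iUnion₂] at hmem
    obtain ⟨n, hnt, hn⟩ := hmem
    have hnM : n.natAbs ≤ M := Finset.le_sup hnt
    have htot : iterZ f (n + ((N : ℤ) + 1 + M)) x ∈ U := by
      rw [iterZ_add]; exact hn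
    have hpos : (0 : ℤ) ≤ n + ((N : ℤ) + 1 + M) := by omega
    refine ⟨(n + ((N : ℤ) + 1 + M)).toNat, ?_, ?_⟩
    · omega
    · rw [show ((n + ((N : ℤ) + 1 + M)).toNat : ℤ) = n + ((N : ℤ) + 1 + M) from
        Int.toNat_of_nonneg hpos]
      exact htot
  have rec' : ∀ k B : ℕ, ∃ n : ℕ, B < n ∧ dist (iterZ f (n : ℤ) x) x < 1 / (k + 1) :=
    fun k B => claim (1 / (k + 1)) (by positivity) B
  choose fn hfn1 hfn2 using rec'
  obtain ⟨m, hm0, hmsucc⟩ : ∃ m : ℕ → ℕ, m 0 = fn 0 0 ∧ ∀ k, m (k + 1) = fn (k + 1) (m k) :=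
    ⟨fun k => Nat.rec (fn 0 0) (fun k ih => fn (k + 1) ih) k, rfl, fun k => rfl⟩
  have hmono : StrictMono m := strictMono_nat_of_lt_succ fun k => by
    rw [hmsucc]; exact hfn1 (k + 1) (m k)
  refine ⟨m, hmono, ?_⟩
  rw [Metric.tendsto_atTop]
  intro ε hε
  obtain ⟨K, hK⟩ := exists_nat_one_div_lt hε
  refine ⟨K + 1, fun k hk => ?_⟩
  have hdk : dist (iterZ f (m k : ℤ) x) x < 1 / (k + 1) := by
    cases k with
    | zero => rw [hm0]; exact hfn2 0 0
    | succ k => rw [hmsucc]; exact hfn2 (k + 1) (m k)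
  calc dist (iterZ f (m k : ℤ) x) x < 1 / (k + 1) := hdk
    _ ≤ 1 / (K + 1) := by
        apply one_div_le_one_div_of_le (by positivity)
        have : (K : ℝ) ≤ k := by exact_mod_cast Nat.le_of_succ_le hk
        linarith
    _ < ε := hK
end D

section E
variable {X Y : Type*} [MetricSpace X] [CompactSpace X] [MetricSpace Y] [CompactSpace Y]

lemma topType_dir (f : X ≃ₜ X) (g : Y ≃ₜ Y) (x : X) (y : Y) (m : ℕ → ℕ)
    (hmono : StrictMono m)
    (hmf : Tendsto (fun k => iterZ f (m k : ℤ) x) atTop (𝓝 x))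
    (hmg : Tendsto (fun k => iterZ g (m k : ℤ) y) atTop (𝓝 y))
    (ST : SameTopType (fun n : ℕ => iterZ f (n : ℤ) x) (fun n : ℕ => iterZ g (n : ℤ) y))
    (n : ℕ → ℤ) (hl : ∃ l, Tendsto (fun k => iterZ f (n k) x) atTop (𝓝 l)) :
    ∃ l, Tendsto (fun k => iterZ g (n k) y) atTop (𝓝 l) := by
  obtain ⟨l, hl⟩ := hl
  -- auxiliary choice: large shifts approximating fixed powers
  have aux : ∀ (k : ℕ) (B : ℤ), ∃ j : ℕ, B < n k + m j ∧
      dist (iterZ f (n k + m j) x) (iterZ f (n k) x) < 1 / (k + 1) ∧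
      dist (iterZ g (n k + m j) y) (iterZ g (n k) y) < 1 / (k + 1) := by
    intro k B
    have hmtop : Tendsto (fun j => ((m j : ℕ) : ℤ)) atTop atTop :=
      tendsto_natCast_atTop_atTop.comp hmono.tendsto_atTop
    have htop : Tendsto (fun j => n k + (m j : ℤ)) atTop atTop :=
      tendsto_atTop_add_const_left _ _ hmtop
    have hFk : Tendsto (fun j => iterZ f (n k + (m j : ℤ)) x) atTop (𝓝 (iterZ f (n k) x)) := by
      have := ((continuous_iterZ f (n k)).tendsto x).comp hmf
      exact this.congr fun j => (iterZ_add f (n k) (m j) x).symm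
    have hGk : Tendsto (fun j => iterZ g (n k + (m j : ℤ)) y) atTop (𝓝 (iterZ g (n k) y)) := by
      have := ((continuous_iterZ g (n k)).tendsto y).comp hmg
      exact this.congr fun j => (iterZ_add g (n k) (m j) y).symm
    have E0 := htop.eventually_gt_atTop B
    have E1 := (Metric.tendsto_nhds.mp hFk) (1 / (k + 1)) (by positivity)
    have E2 := (Metric.tendsto_nhds.mp hGk) (1 / (k + 1)) (by positivity)
    obtain ⟨j, hj⟩ := ((E0.and E1).and E2).exists
    exact ⟨j, hj.1.1, hj.1.2, hj.2⟩
  choose J hJ1 hJ2 hJ3 using aux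
  obtain ⟨c, hc0, hcsucc⟩ : ∃ c : ℕ → ℤ, c 0 = n 0 + m (J 0 0) ∧
      ∀ k, c (k + 1) = n (k + 1) + m (J (k + 1) (c k)) :=
    ⟨fun k => Nat.rec (n 0 + m (J 0 0)) (fun k ih => n (k + 1) + m (J (k + 1) ih)) k,
      rfl, fun k => rfl⟩
  have hlt : ∀ k, c k < c (k + 1) := fun k => by rw [hcsucc]; exact hJ1 (k + 1) (c k)
  have hposk : ∀ k, 0 < c k := by
    intro k
    induction k with
    | zero => rw [hc0]; exact hJ1 0 0
    | succ k ih => exact lt_trans ih (hlt k)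
  have hdf : ∀ k, dist (iterZ f (c k) x) (iterZ f (n k) x) < 1 / (k + 1) := by
    intro k
    cases k with
    | zero => rw [hc0]; exact hJ2 0 0
    | succ k => rw [hcsucc]; exact hJ2 (k + 1) (c k)
  have hdg : ∀ k, dist (iterZ g (c k) y) (iterZ g (n k) y) < 1 / (k + 1) := by
    intro k
    cases k with
    | zero => rw [hc0]; exact hJ3 0 0
    | succ k => rw [hcsucc]; exact hJ3 (k + 1) (c k)
  set N : ℕ → ℕ := fun k => (c k).toNat with hN
  have hNmono : StrictMono N := strictMono_nat_of_lt_succ fun k => by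
    have h1 := hlt k; have h2 := hposk k; simp only [hN]; omega
  have hNc : ∀ k, ((N k : ℕ) : ℤ) = c k := fun k => Int.toNat_of_nonneg (hposk k).le
  have hzero : Tendsto (fun k : ℕ => 1 / ((k : ℝ) + 1)) atTop (𝓝 0) :=
    tendsto_one_div_add_atTop_nhds_zero_nat
  have hFc : Tendsto (fun k => iterZ f (c k) x) atTop (𝓝 l) := by
    refine hl.congr_dist (squeeze_zero (fun k => dist_nonneg) (fun k => ?_) hzero)
    rw [dist_comm]; exact (hdf k).le
  have hFN : Tendsto ((fun n : ℕ => iterZ f (n : ℤ) x) ∘ N) atTop (𝓝 l) :=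
    hFc.congr fun k => by simp only [Function.comp]; rw [← hNc k]
  obtain ⟨l', hGN⟩ := (ST N hNmono).mp ⟨l, hFN⟩
  have hGc : Tendsto (fun k => iterZ g (c k) y) atTop (𝓝 l') :=
    hGN.congr fun k => by simp only [Function.comp]; rw [hNc k]
  refine ⟨l', hGc.congr_dist (squeeze_zero (fun k => dist_nonneg) (fun k => ?_) hzero)⟩
  exact (hdg k).le
end E


/-- Lemma `min`: for pointed minimal compact systems `(X,f,x)` and
`(Y,g,y)`, conjugacy is equivalent to (2) same convergence of `(f^{n_k} x)` and
`(g^{n_k} y)` for all integer sequences, and to (3) same topological type of the forward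
orbits plus a common return-time sequence. -/
theorem pointed_min_conjugacy_iff {X Y : Type*}
    [MetricSpace X] [CompactSpace X] [MetricSpace Y] [CompactSpace Y]
    (f : X ≃ₜ X) (g : Y ≃ₜ Y)
    (hf : ∀ a : X, Dense (Set.range fun n : ℤ => iterZ f n a))
    (hg : ∀ b : Y, Dense (Set.range fun n : ℤ => iterZ g n b))
    (x : X) (y : Y) :
    ((∃ h : X ≃ₜ Y, (∀ a : X, h (f a) = g (h a)) ∧ h x = y) ↔
      (∀ n : ℕ → ℤ,
        (∃ l, Tendsto (fun k => iterZ f (n k) x) atTop (𝓝 l)) ↔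
          (∃ l, Tendsto (fun k => iterZ g (n k) y) atTop (𝓝 l)))) ∧
    ((∃ h : X ≃ₜ Y, (∀ a : X, h (f a) = g (h a)) ∧ h x = y) ↔
      (SameTopType (fun n : ℕ => iterZ f (n : ℤ) x) (fun n : ℕ => iterZ g (n : ℤ) y) ∧
        ∃ m : ℕ → ℕ, StrictMono m ∧
          Tendsto (fun k => iterZ f (m k : ℤ) x) atTop (𝓝 x) ∧
          Tendsto (fun k => iterZ g (m k : ℤ) y) atTop (𝓝 y))) := by

  have iterZconj : ∀ (h : X ≃ₜ Y), (∀ a : X, h (f a) = g (h a)) → h x = y →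
      ∀ k : ℤ, h (iterZ f k x) = iterZ g k y := by
    intro h hcom hx k
    rw [conj_iterZ f g h hcom k x, hx]
  have dir12 : (∃ h : X ≃ₜ Y, (∀ a : X, h (f a) = g (h a)) ∧ h x = y) →
      (∀ n : ℕ → ℤ,
        (∃ l, Tendsto (fun k => iterZ f (n k) x) atTop (𝓝 l)) ↔
          (∃ l, Tendsto (fun k => iterZ g (n k) y) atTop (𝓝 l))) := by
    rintro ⟨h, hcom, hx⟩ n
    have hFn := iterZconj h hcom hx
    constructor
    · rintro ⟨l, hl⟩
      refine ⟨h l, ((h.continuous.tendsto l).comp hl).congr fun k => ?_⟩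
      exact hFn (n k)
    · rintro ⟨l, hl⟩
      refine ⟨h.symm l, ((h.symm.continuous.tendsto l).comp hl).congr fun k => ?_⟩
      show h.symm (iterZ g (n k) y) = iterZ f (n k) x
      rw [← hFn (n k), h.symm_apply_apply]
  have dir21 : (∀ n : ℕ → ℤ,
        (∃ l, Tendsto (fun k => iterZ f (n k) x) atTop (𝓝 l)) ↔
          (∃ l, Tendsto (fun k => iterZ g (n k) y) atTop (𝓝 l))) →
      (∃ h : X ≃ₜ Y, (∀ a : X, h (f a) = g (h a)) ∧ h x = y) := by
    intro H
    obtain ⟨h1, hc1, hn1⟩ := half_conj f g x y (hf x) (keyUC f g x y (fun n => (H n).mp))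
    obtain ⟨h2, hc2, hn2⟩ := half_conj g f y x (hg y) (keyUC g f y x (fun n => (H n).mpr))
    have hleft : h2 ∘ h1 = id := by
      refine Continuous.ext_on (hf x) (hc2.comp hc1) continuous_id ?_
      rintro _ ⟨k, rfl⟩
      show h2 (h1 (iterZ f k x)) = iterZ f k x
      rw [hn1, hn2]
    have hright : h1 ∘ h2 = id := by
      refine Continuous.ext_on (hg y) (hc1.comp hc2) continuous_id ?_
      rintro _ ⟨k, rfl⟩
      show h1 (h2 (iterZ g k y)) = iterZ g k y
      rw [hn2, hn1]
    have hcomm : ∀ a : X, h1 (f a) = g (h1 a) := by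
      have : (fun a => h1 (f a)) = fun a => g (h1 a) := by
        refine Continuous.ext_on (hf x) (hc1.comp f.continuous) (g.continuous.comp hc1) ?_
        rintro _ ⟨k, rfl⟩
        show h1 (f (iterZ f k x)) = g (h1 (iterZ f k x))
        calc h1 (f (iterZ f k x)) = h1 (iterZ f (1 + k) x) := by rw [iterZ_add, iterZ_one]
          _ = iterZ g (1 + k) y := hn1 _
          _ = g (iterZ g k y) := by rw [iterZ_add, iterZ_one]
          _ = g (h1 (iterZ f k x)) := by rw [hn1]
      exact fun a => congrFun this a
    refine ⟨⟨⟨h1, h2, fun a => congrFun hleft a, fun b => congrFun hright b⟩, hc1, hc2⟩,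
      hcomm, ?_⟩
    have := hn1 0
    rwa [iterZ_zero, iterZ_zero] at this
  have dir13 : (∃ h : X ≃ₜ Y, (∀ a : X, h (f a) = g (h a)) ∧ h x = y) →
      (SameTopType (fun n : ℕ => iterZ f (n : ℤ) x) (fun n : ℕ => iterZ g (n : ℤ) y) ∧
        ∃ m : ℕ → ℕ, StrictMono m ∧
          Tendsto (fun k => iterZ f (m k : ℤ) x) atTop (𝓝 x) ∧
          Tendsto (fun k => iterZ g (m k : ℤ) y) atTop (𝓝 y)) := by
    rintro ⟨h, hcom, hx⟩
    have hFn := iterZconj h hcom hx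
    constructor
    · intro φ hφ
      constructor
      · rintro ⟨a, ha⟩
        refine ⟨h a, ((h.continuous.tendsto a).comp ha).congr fun k => ?_⟩
        exact hFn (φ k)
      · rintro ⟨a, ha⟩
        refine ⟨h.symm a, ((h.symm.continuous.tendsto a).comp ha).congr fun k => ?_⟩
        show h.symm (iterZ g (φ k) y) = iterZ f (φ k) x
        rw [← hFn (φ k), h.symm_apply_apply]
    · obtain ⟨m, hmono, hmf⟩ := exists_return f hf x
      refine ⟨m, hmono, hmf, ?_⟩
      have := (h.continuous.tendsto x).comp hmf
      rw [hx] at this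
      exact this.congr fun k => hFn (m k)
  have dir32 : (SameTopType (fun n : ℕ => iterZ f (n : ℤ) x) (fun n : ℕ => iterZ g (n : ℤ) y) ∧
        ∃ m : ℕ → ℕ, StrictMono m ∧
          Tendsto (fun k => iterZ f (m k : ℤ) x) atTop (𝓝 x) ∧
          Tendsto (fun k => iterZ g (m k : ℤ) y) atTop (𝓝 y)) →
      (∀ n : ℕ → ℤ,
        (∃ l, Tendsto (fun k => iterZ f (n k) x) atTop (𝓝 l)) ↔
          (∃ l, Tendsto (fun k => iterZ g (n k) y) atTop (𝓝 l))) := by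
    rintro ⟨ST, m, hmono, hmf, hmg⟩ n
    constructor
    · exact topType_dir f g x y m hmono hmf hmg ST n
    · exact topType_dir g f y x m hmono hmg hmf (fun φ hφ => (ST φ hφ).symm) n
  exact ⟨⟨dir12, dir21⟩, ⟨dir13, fun h3 => dir21 (dir32 h3)⟩⟩
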